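/- Let R be a unique factorization domain with fraction field K and let T = Σ_{i,j} t_{i,j} x^i y^j ∈ R[x,y] be an (n,r)-Brylawski polynomial with some constant c ∈ R∖{0}, where n, r are integers with r ≥ 1 and n − r ≥ 1. Assume: (i) neither x − 1 nor y − 1 divides T in R[x,y]; (ii) t_{1,0} ≠ 0; (iii) deg_x T + deg_y T ∈ {n, n+1} (equivalently, deg_x T + deg_y T ≤ n+1). Then whenever T = U·V with U, V ∈ R[x,y], one of U, V is a constant polynomial (an element of R); in particular T, viewed as an element of K[x,y], is irreducible. -/

import Mathlib

open Polynomial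

/-- Evaluation `U(Y/(Y−1), Y)` in the rational function field over the fraction field of `R`. -/
noncomputable def brylEval (R : Type*) [CommRing R] [IsDomain R]
    (U : Polynomial (Polynomial R)) : RatFunc (FractionRing R) :=
  Polynomial.eval₂
    ((algebraMap (Polynomial (FractionRing R)) (RatFunc (FractionRing R))).comp
      (Polynomial.mapRingHom (algebraMap R (FractionRing R))))
    (RatFunc.X / (RatFunc.X - 1)) U

/-- `U ∈ (R[y])[x]` is an `(n,r)`-Brylawski polynomial with constant `c`, i.e.
`(Y−1)^r · U(Y/(Y−1), Y) = c·Y^n` holds in `K(Y)`, `K` the fraction field of `R`. -/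
noncomputable def IsBrylawski (R : Type*) [CommRing R] [IsDomain R] (n : ℕ) (r : ℤ) (c : R)
    (U : Polynomial (Polynomial R)) : Prop :=
  (RatFunc.X - 1 : RatFunc (FractionRing R)) ^ r * brylEval R U
    = RatFunc.C (algebraMap R (FractionRing R) c) * RatFunc.X ^ n

/-- `deg_y` of a bivariate polynomial in `(R[y])[x]`: the largest `j` such that some
coefficient `u_{i,j}` is nonzero. -/
noncomputable def degY {R : Type*} [CommRing R] (U : Polynomial (Polynomial R)) : ℕ :=
  U.support.sup fun i => (U.coeff i).natDegree
noncomputable def swapPoly {R : Type*} [CommRing R] :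
    Polynomial (Polynomial R) →+* Polynomial (Polynomial R) :=
  Polynomial.eval₂RingHom (Polynomial.mapRingHom Polynomial.C) (Polynomial.C Polynomial.X)

lemma coeff_swapPoly {R : Type*} [CommRing R] (U : Polynomial (Polynomial R)) (i j : ℕ) :
    ((swapPoly U).coeff j).coeff i = (U.coeff i).coeff j := by
  induction U using Polynomial.induction_on' with
  | add p q hp hq => simp [map_add, coeff_add, hp, hq]
  | monomial k p =>
      simp only [swapPoly, coe_eval₂RingHom, eval₂_monomial, coe_mapRingHom, ← map_pow,
        coeff_mul_C, coeff_map, coeff_C_mul, coeff_X_pow, coeff_monomial]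
      by_cases h : k = i <;> simp [h]
      intro h2; exact absurd h2.symm h

lemma exists_coeff_ne_zero' {R : Type*} [CommRing R] {p : Polynomial R} (h : p ≠ 0) :
    ∃ n, p.coeff n ≠ 0 := by
  by_contra h'
  push_neg at h'
  exact h (Polynomial.ext fun n => by simp [h'])

lemma swapPoly_ne_zero {R : Type*} [CommRing R] {U : Polynomial (Polynomial R)} (hU : U ≠ 0) :
    swapPoly U ≠ 0 := by
  obtain ⟨i, hi⟩ := exists_coeff_ne_zero' hU
  obtain ⟨j, hj⟩ := exists_coeff_ne_zero' hi
  intro h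
  apply hj
  rw [← coeff_swapPoly, h]
  simp

lemma natDegree_swapPoly {R : Type*} [CommRing R] (U : Polynomial (Polynomial R)) :
    (swapPoly U).natDegree = degY U := by
  apply le_antisymm
  · by_cases h : swapPoly U = 0
    · simp [h]
    rw [Polynomial.natDegree_le_iff_coeff_eq_zero]
    intro j hj
    ext i
    rw [coeff_swapPoly]
    simp only [coeff_zero]
    by_cases hUi : U.coeff i = 0
    · simp [hUi]
    · apply Polynomial.coeff_eq_zero_of_natDegree_lt
      exact lt_of_le_of_lt (Finset.le_sup (f := fun i => (U.coeff i).natDegree)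
        (Polynomial.mem_support_iff.mpr hUi)) hj
  · rw [degY]
    apply Finset.sup_le
    intro i hi
    rw [Polynomial.mem_support_iff] at hi
    apply Polynomial.le_natDegree_of_ne_zero (n := (U.coeff i).natDegree)
    intro h
    apply Polynomial.leadingCoeff_ne_zero.mpr hi
    rw [Polynomial.leadingCoeff, ← coeff_swapPoly, h]
    simp

lemma degY_mul {R : Type*} [CommRing R] [IsDomain R] {U V : Polynomial (Polynomial R)}
    (hU : U ≠ 0) (hV : V ≠ 0) : degY (U * V) = degY U + degY V := by
  rw [← natDegree_swapPoly, ← natDegree_swapPoly, ← natDegree_swapPoly, map_mul,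
    Polynomial.natDegree_mul (swapPoly_ne_zero hU) (swapPoly_ne_zero hV)]
open Polynomial

noncomputable def Qb (R : Type*) [CommRing R] [IsDomain R]
    (U : Polynomial (Polynomial R)) : Polynomial (FractionRing R) :=
  ∑ i ∈ U.support, ((U.coeff i).map (algebraMap R (FractionRing R))) * X ^ i
      * (X - 1) ^ (U.natDegree - i)

section B
variable (R : Type*) [CommRing R] [IsDomain R]

lemma ratfunc_X_sub_one_ne_zero : (RatFunc.X - 1 : RatFunc (FractionRing R)) ≠ 0 := by
  intro h
  have h1 : (RatFunc.X : RatFunc (FractionRing R)) = 1 := by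
    linear_combination (norm := ring_nf) h
  have := RatFunc.algebraMap_injective (K := FractionRing R)
  rw [← RatFunc.algebraMap_X (K := FractionRing R), ← map_one
    (algebraMap (Polynomial (FractionRing R)) (RatFunc (FractionRing R)))] at h1
  have h2 := this h1
  simpa [Polynomial.coeff_one] using congrArg (fun p => Polynomial.coeff p 1) h2

lemma algebraMap_Qb (U : Polynomial (Polynomial R)) :
    algebraMap (Polynomial (FractionRing R)) (RatFunc (FractionRing R)) (Qb R U)
      = (RatFunc.X - 1) ^ U.natDegree * brylEval R U := by
  rw [brylEval, Polynomial.eval₂_eq_sum, Polynomial.sum_def, Qb, map_sum, Finset.mul_sum]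
  apply Finset.sum_congr rfl
  intro i hi
  have hid : i ≤ U.natDegree := Polynomial.le_natDegree_of_ne_zero
    (Polynomial.mem_support_iff.mp hi)
  rw [map_mul, map_mul, map_pow, map_pow, map_sub, map_one, RatFunc.algebraMap_X]
  have hX1 : (RatFunc.X - 1 : RatFunc (FractionRing R)) ≠ 0 := ratfunc_X_sub_one_ne_zero R
  rw [div_pow]
  field_simp
  rw [mul_assoc, ← pow_add, Nat.sub_add_cancel hid]
  simp only [RingHom.comp_apply, coe_mapRingHom]
  ring
end B
open Polynomial

section C
variable {K : Type*} [Field K]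

lemma X_sub_one_ne_zero' : (X - 1 : Polynomial K) ≠ 0 := by
  have := Polynomial.X_sub_C_ne_zero (1 : K)
  simpa using this

lemma natDegree_X_sub_one' : (X - 1 : Polynomial K).natDegree = 1 := by
  have := Polynomial.natDegree_X_sub_C (1 : K)
  simpa using this

lemma extraction {c : K} (hc : c ≠ 0) (n m : ℕ) :
    ∀ k (W : Polynomial K), W.natDegree ≤ k → W ≠ 0 →
      (W ∣ C c * X ^ n * (X - 1) ^ m) →
      ∃ (u : K) (a b : ℕ), u ≠ 0 ∧ W = C u * X ^ a * (X - 1) ^ b := by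
  intro k
  induction k with
  | zero =>
      intro W hW hW0 _
      have hWC := Polynomial.eq_C_of_natDegree_le_zero hW
      refine ⟨W.coeff 0, 0, 0, ?_, by rw [pow_zero, pow_zero, mul_one, mul_one]; exact hWC⟩
      intro h
      apply hW0
      rw [hWC, h, map_zero]
  | succ k ih =>
      intro W hW hW0 hdvd
      by_cases hW1 : W.natDegree = 0
      · exact ih W (by omega) hW0 hdvd
      have hnu : ¬ IsUnit W := by
        intro h
        obtain ⟨r, hr, hrw⟩ := Polynomial.isUnit_iff.mp h
        rw [← hrw] at hW1
        simp at hW1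
      obtain ⟨p, hp, hpd⟩ := WfDvdMonoid.exists_irreducible_factor hnu hW0
      have hpp : Prime p := hp.prime
      have hpdvd : p ∣ C c * X ^ n * (X - 1) ^ m := hpd.trans hdvd
      have hpX : p ∣ X ∨ p ∣ (X - 1 : Polynomial K) := by
        rcases hpp.dvd_or_dvd hpdvd with h | h
        · rcases hpp.dvd_or_dvd h with h' | h'
          · exact absurd (isUnit_of_dvd_unit h' (Polynomial.isUnit_C.mpr hc.isUnit)) hpp.not_unit
          · exact Or.inl (hpp.dvd_of_dvd_pow h')
        · exact Or.inr (hpp.dvd_of_dvd_pow h)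
      rcases hpX with h | h
      · have hXW : (X : Polynomial K) ∣ W :=
          ((hp.associated_of_dvd Polynomial.irreducible_X h).symm.dvd).trans hpd
        obtain ⟨W', hW'⟩ := hXW
        have hW'0 : W' ≠ 0 := by rintro rfl; rw [mul_zero] at hW'; exact hW0 hW'
        have hdegW' : W'.natDegree ≤ k := by
          have h2 := Polynomial.natDegree_mul (Polynomial.X_ne_zero (R := K)) hW'0
          rw [hW'] at hW
          rw [h2, Polynomial.natDegree_X] at hW
          omega
        have hW'dvd : W' ∣ C c * X ^ n * (X - 1) ^ m :=
          (Dvd.intro_left X hW'.symm).trans hdvd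
        obtain ⟨u, a, b, hu, hab⟩ := ih W' hdegW' hW'0 hW'dvd
        exact ⟨u, a + 1, b, hu, by rw [hW', hab]; ring⟩
      · have hX1irr : Irreducible (X - 1 : Polynomial K) := by
          have := Polynomial.irreducible_X_sub_C (1 : K)
          simpa using this
        have hXW : (X - 1 : Polynomial K) ∣ W :=
          ((hp.associated_of_dvd hX1irr h).symm.dvd).trans hpd
        obtain ⟨W', hW'⟩ := hXW
        have hW'0 : W' ≠ 0 := by rintro rfl; rw [mul_zero] at hW'; exact hW0 hW'
        have hdegW' : W'.natDegree ≤ k := by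
          have h2 := Polynomial.natDegree_mul (X_sub_one_ne_zero' (K := K)) hW'0
          rw [hW'] at hW
          rw [h2, natDegree_X_sub_one'] at hW
          omega
        have hW'dvd : W' ∣ C c * X ^ n * (X - 1) ^ m :=
          (Dvd.intro_left _ hW'.symm).trans hdvd
        obtain ⟨u, a, b, hu, hab⟩ := ih W' hdegW' hW'0 hW'dvd
        exact ⟨u, a, b + 1, hu, by rw [hW', hab]; ring⟩

lemma CXpow_ne_zero {u : K} (hu : u ≠ 0) (a b : ℕ) :
    (C u * X ^ a * (X - 1) ^ b : Polynomial K) ≠ 0 :=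
  mul_ne_zero (mul_ne_zero (Polynomial.C_ne_zero.mpr hu) (pow_ne_zero _ Polynomial.X_ne_zero))
    (pow_ne_zero _ X_sub_one_ne_zero')

lemma natDegree_CXpow {u : K} (hu : u ≠ 0) (a b : ℕ) :
    (C u * X ^ a * (X - 1) ^ b : Polynomial K).natDegree = a + b := by
  rw [Polynomial.natDegree_mul (mul_ne_zero (Polynomial.C_ne_zero.mpr hu)
      (pow_ne_zero _ Polynomial.X_ne_zero)) (pow_ne_zero _ X_sub_one_ne_zero'),
    Polynomial.natDegree_mul (Polynomial.C_ne_zero.mpr hu) (pow_ne_zero _ Polynomial.X_ne_zero),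
    Polynomial.natDegree_C, Polynomial.natDegree_pow, Polynomial.natDegree_pow,
    Polynomial.natDegree_X, natDegree_X_sub_one']
  ring

lemma rm0_X_sub_one_pow (b : ℕ) :
    Polynomial.rootMultiplicity 0 ((X - 1 : Polynomial K) ^ b) = 0 := by
  apply Polynomial.rootMultiplicity_eq_zero
  intro h
  rw [Polynomial.IsRoot, Polynomial.eval_pow] at h
  simp at h

lemma rm_zero_CXpow {u : K} (hu : u ≠ 0) (a b : ℕ) :
    Polynomial.rootMultiplicity 0 (C u * X ^ a * (X - 1) ^ b : Polynomial K) = a := by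
  rw [Polynomial.rootMultiplicity_mul (CXpow_ne_zero hu a b),
    Polynomial.rootMultiplicity_mul (mul_ne_zero (Polynomial.C_ne_zero.mpr hu)
      (pow_ne_zero _ Polynomial.X_ne_zero)),
    Polynomial.rootMultiplicity_C, rm0_X_sub_one_pow]
  have : (X ^ a : Polynomial K) = (X - C 0) ^ a := by simp
  rw [this, Polynomial.rootMultiplicity_X_sub_C_pow]
  ring
end C

section D
variable (R : Type*) [CommRing R] [IsDomain R]

local notation "K" => FractionRing R
local notation "φ" => algebraMap R (FractionRing R)
local notation "ι" => algebraMap (Polynomial (FractionRing R)) (RatFunc (FractionRing R))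

lemma iota_injective : Function.Injective (ι) :=
  IsFractionRing.injective (Polynomial (FractionRing R)) (RatFunc (FractionRing R))

lemma phi_injective : Function.Injective (φ) :=
  IsFractionRing.injective R (FractionRing R)

lemma brylEval_mul (U V : Polynomial (Polynomial R)) :
    brylEval R (U * V) = brylEval R U * brylEval R V := by
  rw [brylEval, brylEval, brylEval, Polynomial.eval₂_mul]

lemma Qb_mul {U V : Polynomial (Polynomial R)} (hU : U ≠ 0) (hV : V ≠ 0) :
    Qb R (U * V) = Qb R U * Qb R V := by
  apply iota_injective R
  rw [map_mul, algebraMap_Qb, algebraMap_Qb, algebraMap_Qb, brylEval_mul,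
    Polynomial.natDegree_mul hU hV, pow_add]
  ring

lemma eval_zero_Qb (U : Polynomial (Polynomial R)) :
    (Qb R U).eval 0 = (-1) ^ U.natDegree * φ ((U.coeff 0).coeff 0) := by
  rw [Qb, Polynomial.eval_finset_sum]
  rw [Finset.sum_eq_single 0]
  · by_cases h0 : (0 : ℕ) ∈ U.support
    · simp [Polynomial.eval_pow, Polynomial.eval_mul, Polynomial.eval_map,
        Polynomial.eval₂_at_zero, Polynomial.coeff_map]
      ring
    · rw [Polynomial.notMem_support_iff] at h0
      rw [h0]
      simp
  · intro i hi hne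
    simp [Polynomial.eval_pow, Polynomial.eval_mul, zero_pow hne]
  · intro h0
    rw [Polynomial.notMem_support_iff] at h0
    rw [h0]
    simp

lemma eval_one_Qb {U : Polynomial (Polynomial R)} (hU : U ≠ 0) :
    (Qb R U).eval 1 = φ ((U.coeff U.natDegree).eval 1) := by
  rw [Qb, Polynomial.eval_finset_sum]
  rw [Finset.sum_eq_single U.natDegree]
  · rw [Polynomial.eval_mul, Polynomial.eval_mul, Polynomial.eval_pow, Polynomial.eval_pow]
    simp [Polynomial.eval_map, Polynomial.eval₂_at_one]
  · intro i hi hne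
    have hlt : U.natDegree - i ≠ 0 := by
      have := Polynomial.le_natDegree_of_ne_zero (Polynomial.mem_support_iff.mp hi)
      omega
    rw [Polynomial.eval_mul, Polynomial.eval_pow]
    simp [zero_pow hlt]
  · intro h
    exact absurd (Polynomial.natDegree_mem_support_of_nonzero hU) h

lemma natDegree_Qb_le (U : Polynomial (Polynomial R)) :
    (Qb R U).natDegree ≤ U.natDegree + degY U := by
  apply Polynomial.natDegree_sum_le_of_forall_le
  intro i hi
  apply le_trans (Polynomial.natDegree_mul_le)
  have h1 : ((U.coeff i).map (φ)).natDegree ≤ degY U :=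
    le_trans Polynomial.natDegree_map_le (by unfold degY; exact Finset.le_sup (f := fun i => (U.coeff i).natDegree) hi)
  have h2 : ((X - 1 : Polynomial K) ^ (U.natDegree - i)).natDegree ≤ U.natDegree - i := by
    apply le_trans (Polynomial.natDegree_pow_le)
    rw [natDegree_X_sub_one']
    omega
  have h3 := Polynomial.natDegree_mul_le (p := (U.coeff i).map (φ)) (q := (X : Polynomial K) ^ i)
  have h4 : ((X : Polynomial K) ^ i).natDegree ≤ i := by
    simp [Polynomial.natDegree_X_pow]
  have hile := Polynomial.le_natDegree_of_ne_zero (Polynomial.mem_support_iff.mp hi)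
  omega

end D
section E
variable {R : Type*} [CommRing R] [IsDomain R]

local notation "K" => FractionRing R
local notation "φ" => algebraMap R (FractionRing R)
local notation "ι" => algebraMap (Polynomial (FractionRing R)) (RatFunc (FractionRing R))

lemma neg_one_pow_ne_zero' {d : ℕ} : ((-1 : K)) ^ d ≠ 0 := by
  apply pow_ne_zero
  norm_num

lemma coeff00_eq_zero_iff {U : Polynomial (Polynomial R)} {u : K} {a b : ℕ}
    (hQ : Qb R U = C u * X ^ a * (X - 1) ^ b) (hu : u ≠ 0) :
    (U.coeff 0).coeff 0 = 0 ↔ 1 ≤ a := by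
  have h := eval_zero_Qb R U
  rw [hQ] at h
  rw [Polynomial.eval_mul, Polynomial.eval_mul, Polynomial.eval_pow, Polynomial.eval_pow,
    Polynomial.eval_C, Polynomial.eval_X, Polynomial.eval_sub, Polynomial.eval_X,
    Polynomial.eval_one, zero_sub] at h
  constructor
  · intro h0
    by_contra ha
    have ha0 : a = 0 := by omega
    rw [ha0, pow_zero, mul_one, h0, map_zero, mul_zero] at h
    exact (mul_ne_zero hu neg_one_pow_ne_zero') h
  · intro ha
    have ha0 : (0 : K) ^ a = 0 := zero_pow (by omega)
    rw [ha0, mul_zero, zero_mul] at h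
    have := (mul_eq_zero.mp h.symm).resolve_left neg_one_pow_ne_zero'
    exact phi_injective R (by rw [this, map_zero])

lemma top_eval_one_eq_zero_iff {U : Polynomial (Polynomial R)} {u : K} {a b : ℕ}
    (hU : U ≠ 0) (hQ : Qb R U = C u * X ^ a * (X - 1) ^ b) (hu : u ≠ 0) :
    (U.coeff U.natDegree).eval 1 = 0 ↔ 1 ≤ b := by
  have h := eval_one_Qb R hU
  rw [hQ] at h
  rw [Polynomial.eval_mul, Polynomial.eval_mul, Polynomial.eval_pow, Polynomial.eval_pow,
    Polynomial.eval_C, Polynomial.eval_X, Polynomial.eval_sub, Polynomial.eval_X,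
    Polynomial.eval_one, one_pow, mul_one, sub_self] at h
  constructor
  · intro h0
    by_contra hb
    have hb0 : b = 0 := by omega
    rw [hb0, pow_zero, mul_one, h0, map_zero] at h
    first | exact hu h | exact hu h.symm
  · intro hb
    have hb0 : (0 : K) ^ b = 0 := zero_pow (by omega)
    rw [hb0, mul_zero] at h
    exact phi_injective R (by rw [map_zero]; exact h.symm)

lemma t10_expand {T U V : Polynomial (Polynomial R)} (hUV : T = U * V) :
    (T.coeff 1).coeff 0 =
      (U.coeff 0).coeff 0 * (V.coeff 1).coeff 0 + (U.coeff 1).coeff 0 * (V.coeff 0).coeff 0 := by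
  have h : T.coeff 1 = U.coeff 0 * V.coeff 1 + U.coeff 1 * V.coeff 0 := by
    rw [hUV, Polynomial.coeff_mul, Finset.Nat.sum_antidiagonal_eq_sum_range_succ_mk]
    simp [Finset.sum_range_succ]
  rw [h, Polynomial.coeff_add, Polynomial.mul_coeff_zero, Polynomial.mul_coeff_zero]

lemma natDegree_coeff_le_degY (U : Polynomial (Polynomial R)) (i : ℕ) :
    (U.coeff i).natDegree ≤ degY U := by
  by_cases hi : U.coeff i = 0
  · simp [hi]
  · exact Finset.le_sup (f := fun i => (U.coeff i).natDegree)
      (Polynomial.mem_support_iff.mpr hi)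

lemma const_of_dims {U : Polynomial (Polynomial R)} (h1 : U.natDegree = 0) (h2 : degY U = 0) :
    ∃ a : R, U = Polynomial.C (Polynomial.C a) := by
  have hU : U = Polynomial.C (U.coeff 0) := Polynomial.eq_C_of_natDegree_le_zero (le_of_eq h1)
  have hC : (U.coeff 0).natDegree = 0 := by
    have := natDegree_coeff_le_degY U 0
    omega
  refine ⟨(U.coeff 0).coeff 0, ?_⟩
  conv_lhs => rw [hU, Polynomial.eq_C_of_natDegree_le_zero (le_of_eq hC)]

lemma support_eq_singleton_of_natDegree_zero {U : Polynomial (Polynomial R)} (hU : U ≠ 0)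
    (h : U.natDegree = 0) : U.support = {0} := by
  ext i
  simp only [Polynomial.mem_support_iff, Finset.mem_singleton]
  constructor
  · intro hi
    have := Polynomial.le_natDegree_of_ne_zero hi
    omega
  · rintro rfl
    intro h0
    exact hU (by rw [Polynomial.eq_C_of_natDegree_le_zero (le_of_eq h), h0, map_zero])

lemma Qb_of_natDegree_zero {U : Polynomial (Polynomial R)} (hU : U ≠ 0) (h : U.natDegree = 0) :
    Qb R U = (U.coeff 0).map (φ) := by
  rw [Qb, support_eq_singleton_of_natDegree_zero hU h, Finset.sum_singleton]
  simp [h]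

lemma degY_of_natDegree_zero {U : Polynomial (Polynomial R)} (hU : U ≠ 0) (h : U.natDegree = 0) :
    degY U = (U.coeff 0).natDegree := by
  unfold degY
  rw [support_eq_singleton_of_natDegree_zero hU h, Finset.sup_singleton]

lemma Qb_coeff_top_of_degY_zero {U : Polynomial (Polynomial R)} (h : degY U = 0) :
    (Qb R U).coeff U.natDegree = φ ((U.eval 1).coeff 0) := by
  have hcoeff : ∀ i, U.coeff i = Polynomial.C ((U.coeff i).coeff 0) := by
    intro i
    apply Polynomial.eq_C_of_natDegree_le_zero
    by_cases hi : U.coeff i = 0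
    · rw [hi]; simp
    · rw [← h]
      unfold degY
      exact Finset.le_sup (f := fun i => (U.coeff i).natDegree)
        (Polynomial.mem_support_iff.mpr hi)
  have heval : U.eval 1 = ∑ i ∈ U.support, U.coeff i := by
    rw [Polynomial.eval_eq_sum, Polynomial.sum_def]
    simp
  rw [Qb, Polynomial.finset_sum_coeff, heval, Polynomial.finset_sum_coeff, map_sum]
  apply Finset.sum_congr rfl
  intro i hi
  have hile : i ≤ U.natDegree := Polynomial.le_natDegree_of_ne_zero
    (Polynomial.mem_support_iff.mp hi)
  have hmonic : ((X : Polynomial K) ^ i * (X - 1) ^ (U.natDegree - i)).Monic := by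
    apply (Polynomial.monic_X_pow i).mul
    have : (X - 1 : Polynomial K) = X - Polynomial.C 1 := by simp
    rw [this]
    exact (Polynomial.monic_X_sub_C 1).pow _
  have hdeg : ((X : Polynomial K) ^ i * (X - 1) ^ (U.natDegree - i)).natDegree
      = U.natDegree := by
    rw [Polynomial.natDegree_mul (pow_ne_zero _ Polynomial.X_ne_zero)
      (pow_ne_zero _ X_sub_one_ne_zero'), Polynomial.natDegree_pow, Polynomial.natDegree_pow,
      Polynomial.natDegree_X, natDegree_X_sub_one']
    omega
  set W : Polynomial K := X ^ i * (X - 1) ^ (U.natDegree - i) with hWdef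
  have hcn : W.coeff U.natDegree = 1 := by
    rw [← hdeg]
    exact hmonic.coeff_natDegree
  rw [hcoeff i, Polynomial.map_C, mul_assoc, ← hWdef, Polynomial.coeff_C_mul, hcn, mul_one,
    Polynomial.coeff_C]
  simp

lemma decomp {n : ℕ} {r : ℤ} {c : R} (hc : c ≠ 0) {T U V : Polynomial (Polynomial R)}
    (hT : IsBrylawski R n r c T) (hr : 1 ≤ r) (hT0 : T ≠ 0) (hUV : T = U * V) :
    ∃ (uU uV : K) (aU bU aV bV : ℕ), uU ≠ 0 ∧ uV ≠ 0 ∧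
      Qb R U = C uU * X ^ aU * (X - 1) ^ bU ∧
      Qb R V = C uV * X ^ aV * (X - 1) ^ bV ∧ aU + aV = n := by
  have hU0 : U ≠ 0 := fun h => hT0 (by rw [hUV, h, zero_mul])
  have hV0 : V ≠ 0 := fun h => hT0 (by rw [hUV, h, mul_zero])
  have hc' : (φ) c ≠ 0 := fun h => hc (phi_injective R (by rw [h, map_zero]))
  set r' : ℕ := r.toNat with hr'def
  have hrr : r = (r' : ℤ) := (Int.toNat_of_nonneg (by omega)).symm
  rw [IsBrylawski, hrr, zpow_natCast] at hT
  -- key equation in K[Y]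
  have hkey : Qb R T * (X - 1) ^ r' = C ((φ) c) * X ^ n * (X - 1) ^ T.natDegree := by
    apply iota_injective R
    rw [map_mul, map_mul, map_mul, map_pow, map_pow, map_pow, map_sub, map_one,
      RatFunc.algebraMap_X, RatFunc.algebraMap_C, algebraMap_Qb]
    linear_combination ((RatFunc.X - 1 : RatFunc (FractionRing R)) ^ T.natDegree) * hT
  have hRHS0 : (C ((φ) c) * X ^ n * (X - 1) ^ T.natDegree : Polynomial K) ≠ 0 :=
    CXpow_ne_zero hc' n T.natDegree
  have hQT0 : Qb R T ≠ 0 := by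
    intro h
    rw [h, zero_mul] at hkey
    exact hRHS0 hkey.symm
  have hQmul : Qb R T = Qb R U * Qb R V := by
    rw [hUV]; exact Qb_mul R hU0 hV0
  have hQU0 : Qb R U ≠ 0 := by
    intro h; rw [hQmul, h, zero_mul] at hQT0; exact hQT0 rfl
  have hQV0 : Qb R V ≠ 0 := by
    intro h; rw [hQmul, h, mul_zero] at hQT0; exact hQT0 rfl
  have hdvdU : Qb R U ∣ C ((φ) c) * X ^ n * (X - 1) ^ T.natDegree :=
    ⟨Qb R V * (X - 1) ^ r', by rw [← hkey, hQmul]; ring⟩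
  have hdvdV : Qb R V ∣ C ((φ) c) * X ^ n * (X - 1) ^ T.natDegree :=
    ⟨Qb R U * (X - 1) ^ r', by rw [← hkey, hQmul]; ring⟩
  obtain ⟨uU, aU, bU, huU, hQU⟩ :=
    extraction hc' n T.natDegree (Qb R U).natDegree (Qb R U) le_rfl hQU0 hdvdU
  obtain ⟨uV, aV, bV, huV, hQV⟩ :=
    extraction hc' n T.natDegree (Qb R V).natDegree (Qb R V) le_rfl hQV0 hdvdV
  refine ⟨uU, uV, aU, bU, aV, bV, huU, huV, hQU, hQV, ?_⟩
  -- root multiplicity at 0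
  have hprod : (C (uU * uV) * X ^ (aU + aV) * (X - 1) ^ (bU + bV + r') : Polynomial K)
      = C ((φ) c) * X ^ n * (X - 1) ^ T.natDegree := by
    rw [← hkey, hQmul, hQU, hQV, Polynomial.C_mul, pow_add, pow_add, pow_add]
    ring
  have h1 := congrArg (Polynomial.rootMultiplicity 0) hprod
  rw [rm_zero_CXpow (mul_ne_zero huU huV), rm_zero_CXpow hc'] at h1
  exact h1

end E
section F
variable {R : Type*} [CommRing R] [IsDomain R]

local notation "K" => FractionRing R
local notation "φ" => algebraMap R (FractionRing R)

lemma eval_one_C_of_degY_zero {W : Polynomial (Polynomial R)} (h : degY W = 0) :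
    W.eval 1 = Polynomial.C ((W.eval 1).coeff 0) := by
  apply Polynomial.eq_C_of_natDegree_le_zero
  have heval : W.eval 1 = ∑ i ∈ W.support, W.coeff i := by
    rw [Polynomial.eval_eq_sum, Polynomial.sum_def]
    simp
  rw [heval]
  apply Polynomial.natDegree_sum_le_of_forall_le
  intro i _
  exact le_trans (natDegree_coeff_le_degY W i) (le_of_eq h)

lemma X_sub_one_dvd_of_eval_one {W : Polynomial (Polynomial R)} (h : W.eval 1 = 0) :
    (Polynomial.X - 1 : Polynomial (Polynomial R)) ∣ W := by
  have h2 : (Polynomial.X - Polynomial.C (1 : Polynomial R)) ∣ W :=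
    Polynomial.dvd_iff_isRoot.mpr h
  simpa using h2

lemma C_X_sub_one_dvd {W : Polynomial R} (h : W.eval 1 = 0) :
    (Polynomial.C (Polynomial.X - 1) : Polynomial (Polynomial R)) ∣ Polynomial.C W := by
  have h2 : (Polynomial.X - Polynomial.C (1 : R)) ∣ W := Polynomial.dvd_iff_isRoot.mpr h
  have h3 := map_dvd (Polynomial.C : Polynomial R →+* Polynomial (Polynomial R)) h2
  simpa using h3

lemma sub1 {T W : Polynomial (Polynomial R)}
    (hx1 : ¬ ((Polynomial.X - 1 : Polynomial (Polynomial R)) ∣ T))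
    (hW0 : W ≠ 0) (hWT : W ∣ T) (hdyW : degY W = 0) (hdxW : 1 ≤ W.natDegree)
    {u : K} {a b : ℕ} (hu : u ≠ 0) (hQW : Qb R W = C u * X ^ a * (X - 1) ^ b) :
    b = 0 ∧ 1 ≤ a := by
  have hb : b = 0 := by
    by_contra hb
    have h1 : (W.coeff W.natDegree).eval 1 = 0 :=
      (top_eval_one_eq_zero_iff hW0 hQW hu).mpr (by omega)
    have hconst : W.coeff W.natDegree = Polynomial.C ((W.coeff W.natDegree).coeff 0) :=
      Polynomial.eq_C_of_natDegree_le_zero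
        (le_trans (natDegree_coeff_le_degY W _) (le_of_eq hdyW))
    rw [hconst] at h1
    simp only [Polynomial.eval_C] at h1
    have hlc : W.coeff W.natDegree ≠ 0 := by
      rw [Polynomial.coeff_natDegree]
      exact Polynomial.leadingCoeff_ne_zero.mpr hW0
    exact hlc (by rw [hconst, h1, map_zero])
  refine ⟨hb, ?_⟩
  by_contra ha
  have ha0 : a = 0 := by omega
  rw [hb, ha0, pow_zero, pow_zero, mul_one, mul_one] at hQW
  have hco := Qb_coeff_top_of_degY_zero (R := R) (U := W) hdyW
  rw [hQW, Polynomial.coeff_C, if_neg (by omega : ¬ W.natDegree = 0)] at hco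
  have h0 : (W.eval 1).coeff 0 = 0 := phi_injective R (by rw [← hco, map_zero])
  have hWe : W.eval 1 = 0 := by rw [eval_one_C_of_degY_zero hdyW, h0, map_zero]
  exact hx1 ((X_sub_one_dvd_of_eval_one hWe).trans hWT)

lemma caseY {n : ℕ} {r : ℤ} {c : R} (hc : c ≠ 0) {T U V : Polynomial (Polynomial R)}
    (hT : IsBrylawski R n r c T) (hr : 1 ≤ r)
    (hy1 : ¬ ((Polynomial.C (Polynomial.X - 1) : Polynomial (Polynomial R)) ∣ T))
    (ht10 : (T.coeff 1).coeff 0 ≠ 0)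
    (hUV : T = U * V) (hdxU : U.natDegree = 0) (hdyU : 1 ≤ degY U) : False := by
  have hT0 : T ≠ 0 := fun h => ht10 (by rw [h]; simp)
  have hU0 : U ≠ 0 := fun h => hT0 (by rw [hUV, h, zero_mul])
  obtain ⟨uU, uV, aU, bU, aV, bV, huU, huV, hQU, hQV, hsum⟩ := decomp hc hT hr hT0 hUV
  have hQdeg : (Qb R U).natDegree = aU + bU := by rw [hQU]; exact natDegree_CXpow huU aU bU
  have hQdeg2 : (Qb R U).natDegree = degY U := by
    rw [Qb_of_natDegree_zero hU0 hdxU, Polynomial.natDegree_map_eq_of_injective (phi_injective R),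
      degY_of_natDegree_zero hU0 hdxU]
  have hbU : bU = 0 := by
    by_contra hb
    have h1 : (U.coeff U.natDegree).eval 1 = 0 :=
      (top_eval_one_eq_zero_iff hU0 hQU huU).mpr (by omega)
    rw [hdxU] at h1
    apply hy1
    have hUC : U = Polynomial.C (U.coeff 0) := Polynomial.eq_C_of_natDegree_le_zero (le_of_eq hdxU)
    have := C_X_sub_one_dvd h1
    rw [← hUC] at this
    exact this.trans ⟨V, hUV⟩
  have haU : 1 ≤ aU := by omega
  have h00 : (U.coeff 0).coeff 0 = 0 := (coeff00_eq_zero_iff hQU huU).mpr haU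
  have h1z : U.coeff 1 = 0 := Polynomial.coeff_eq_zero_of_natDegree_lt (by omega)
  apply ht10
  rw [t10_expand hUV, h00, h1z]
  simp

lemma main_half {n : ℕ} {T U V : Polynomial (Polynomial R)} {uV : K} {aV bV : ℕ}
    (hbound : T.natDegree + degY T ≤ n + 1) (hU0 : U ≠ 0) (hV0 : V ≠ 0) (hUV : T = U * V)
    (hdxU : 1 ≤ U.natDegree) (hdyU : 1 ≤ degY U) (hn : n ≤ aV) (huV : uV ≠ 0)
    (hQV : Qb R V = C uV * X ^ aV * (X - 1) ^ bV) : False := by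
  have hDX : T.natDegree = U.natDegree + V.natDegree := by
    rw [hUV, Polynomial.natDegree_mul hU0 hV0]
  have hDY : degY T = degY U + degY V := by rw [hUV, degY_mul hU0 hV0]
  have h1 : (Qb R V).natDegree = aV + bV := by rw [hQV]; exact natDegree_CXpow huV aV bV
  have h2 := natDegree_Qb_le R V
  omega

lemma caseX {n : ℕ} {r : ℤ} {c : R} (hc : c ≠ 0) {T U V : Polynomial (Polynomial R)}
    (hT : IsBrylawski R n r c T) (hr : 1 ≤ r)
    (hx1 : ¬ ((Polynomial.X - 1 : Polynomial (Polynomial R)) ∣ T))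
    (hy1 : ¬ ((Polynomial.C (Polynomial.X - 1) : Polynomial (Polynomial R)) ∣ T))
    (ht10 : (T.coeff 1).coeff 0 ≠ 0)
    (hbound : T.natDegree + degY T ≤ n + 1)
    (hUV : T = U * V) (hdyU : degY U = 0) (hdxU : 1 ≤ U.natDegree)
    (hVnc : ¬ ∃ a : R, V = Polynomial.C (Polynomial.C a)) : False := by
  have hT0 : T ≠ 0 := fun h => ht10 (by rw [h]; simp)
  have hU0 : U ≠ 0 := fun h => hT0 (by rw [hUV, h, zero_mul])
  have hV0 : V ≠ 0 := fun h => hT0 (by rw [hUV, h, mul_zero])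
  obtain ⟨uU, uV, aU, bU, aV, bV, huU, huV, hQU, hQV, hsum⟩ := decomp hc hT hr hT0 hUV
  obtain ⟨hbU, haU⟩ := sub1 hx1 hU0 ⟨V, hUV⟩ hdyU hdxU huU hQU
  have h00U : (U.coeff 0).coeff 0 = 0 := (coeff00_eq_zero_iff hQU huU).mpr haU
  have hv00 : (V.coeff 0).coeff 0 ≠ 0 := by
    intro h
    apply ht10
    rw [t10_expand hUV, h00U, h]
    ring
  have haV : aV = 0 := by
    by_contra h
    exact hv00 ((coeff00_eq_zero_iff hQV huV).mpr (by omega))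
  have hndU : n ≤ U.natDegree := by
    have h1 : (Qb R U).natDegree = aU + bU := by rw [hQU]; exact natDegree_CXpow huU aU bU
    have h2 := natDegree_Qb_le R U
    omega
  have hDX : T.natDegree = U.natDegree + V.natDegree := by
    rw [hUV, Polynomial.natDegree_mul hU0 hV0]
  have hDY : degY T = degY U + degY V := by rw [hUV, degY_mul hU0 hV0]
  by_cases hdxV : V.natDegree = 0
  · by_cases hdyV : degY V = 0
    · exact hVnc (const_of_dims hdxV hdyV)
    · have hbV : 1 ≤ bV := by
        have h1 : (Qb R V).natDegree = aV + bV := by rw [hQV]; exact natDegree_CXpow huV aV bV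
        have h2 : (Qb R V).natDegree = degY V := by
          rw [Qb_of_natDegree_zero hV0 hdxV,
            Polynomial.natDegree_map_eq_of_injective (phi_injective R),
            degY_of_natDegree_zero hV0 hdxV]
        omega
      have h1 : (V.coeff V.natDegree).eval 1 = 0 :=
        (top_eval_one_eq_zero_iff hV0 hQV huV).mpr hbV
      rw [hdxV] at h1
      apply hy1
      have hVC : V = Polynomial.C (V.coeff 0) :=
        Polynomial.eq_C_of_natDegree_le_zero (le_of_eq hdxV)
      have := C_X_sub_one_dvd h1
      rw [← hVC] at this
      exact this.trans ⟨U, by rw [hUV, mul_comm]⟩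
  · obtain ⟨hbV, haV'⟩ := sub1 hx1 hV0 ⟨U, by rw [hUV, mul_comm]⟩ (by omega) (by omega) huV hQV
    omega

lemma no_factor {n : ℕ} {r : ℤ} {c : R} (hc : c ≠ 0) {T U V : Polynomial (Polynomial R)}
    (hT : IsBrylawski R n r c T) (hr : 1 ≤ r)
    (hx1 : ¬ ((Polynomial.X - 1 : Polynomial (Polynomial R)) ∣ T))
    (hy1 : ¬ ((Polynomial.C (Polynomial.X - 1) : Polynomial (Polynomial R)) ∣ T))
    (ht10 : (T.coeff 1).coeff 0 ≠ 0)
    (hbound : T.natDegree + degY T ≤ n + 1)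
    (hUV : T = U * V) :
    (∃ a : R, U = Polynomial.C (Polynomial.C a)) ∨
      (∃ a : R, V = Polynomial.C (Polynomial.C a)) := by
  by_cases hUc : ∃ a : R, U = Polynomial.C (Polynomial.C a)
  · exact Or.inl hUc
  by_cases hVc : ∃ a : R, V = Polynomial.C (Polynomial.C a)
  · exact Or.inr hVc
  exfalso
  have hT0 : T ≠ 0 := fun h => ht10 (by rw [h]; simp)
  have hU0 : U ≠ 0 := fun h => hT0 (by rw [hUV, h, zero_mul])
  have hV0 : V ≠ 0 := fun h => hT0 (by rw [hUV, h, mul_zero])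
  by_cases hdxU : U.natDegree = 0
  · by_cases hdyU : degY U = 0
    · exact hUc (const_of_dims hdxU hdyU)
    · exact caseY hc hT hr hy1 ht10 hUV hdxU (by omega)
  by_cases hdyU : degY U = 0
  · exact caseX hc hT hr hx1 hy1 ht10 hbound hUV hdyU (by omega) hVc
  -- U has both dims ≥ 1; now case on V
  have hVU : T = V * U := by rw [hUV, mul_comm]
  by_cases hdxV : V.natDegree = 0
  · by_cases hdyV : degY V = 0
    · exact hVc (const_of_dims hdxV hdyV)
    · exact caseY hc hT hr hy1 ht10 hVU hdxV (by omega)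
  by_cases hdyV : degY V = 0
  · exact caseX hc hT hr hx1 hy1 ht10 hbound hVU hdyV (by omega) hUc
  -- main case
  obtain ⟨uU, uV, aU, bU, aV, bV, huU, huV, hQU, hQV, hsum⟩ := decomp hc hT hr hT0 hUV
  have hor : (U.coeff 0).coeff 0 ≠ 0 ∨ (V.coeff 0).coeff 0 ≠ 0 := by
    by_contra h
    push_neg at h
    apply ht10
    rw [t10_expand hUV, h.1, h.2]
    ring
  rcases hor with h | h
  · have haU : aU = 0 := by
      by_contra h'
      exact h ((coeff00_eq_zero_iff hQU huU).mpr (by omega))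
    exact main_half hbound hU0 hV0 hUV (by omega) (by omega) (by omega) huV hQV
  · have haV : aV = 0 := by
      by_contra h'
      exact h ((coeff00_eq_zero_iff hQV huV).mpr (by omega))
    exact main_half hbound hV0 hU0 hVU (by omega) (by omega) (by omega) huU hQU

end F
section G
variable {R : Type*} [CommRing R] [IsDomain R]

local notation "K" => FractionRing R
local notation "φ" => algebraMap R (FractionRing R)
local notation "Φ" => Polynomial.mapRingHom (algebraMap R (FractionRing R))

lemma Phi_injective : Function.Injective fun p : Polynomial (Polynomial R) => p.map (Φ) := by
  apply Polynomial.map_injective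
  rw [Polynomial.coe_mapRingHom]
  exact Polynomial.map_injective _ (phi_injective R)

lemma exists_denom_inner (q : Polynomial K) :
    ∃ d : R, d ≠ 0 ∧ ∃ q0 : Polynomial R,
      q0.map (φ) = Polynomial.C ((φ) d) * q := by
  induction q using Polynomial.induction_on' with
  | add p q hp hq =>
      obtain ⟨d1, hd1, q1, hq1⟩ := hp
      obtain ⟨d2, hd2, q2, hq2⟩ := hq
      refine ⟨d1 * d2, mul_ne_zero hd1 hd2, Polynomial.C d2 * q1 + Polynomial.C d1 * q2, ?_⟩
      rw [Polynomial.map_add, Polynomial.map_mul, Polynomial.map_mul, Polynomial.map_C,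
        Polynomial.map_C, hq1, hq2, map_mul, Polynomial.C_mul]
      ring
  | monomial k x =>
      obtain ⟨⟨a, s⟩, hs⟩ := IsLocalization.surj (nonZeroDivisors R) x
      refine ⟨s, nonZeroDivisors.ne_zero s.2, Polynomial.monomial k a, ?_⟩
      rw [Polynomial.map_monomial, ← hs, Polynomial.C_mul_monomial, mul_comm]

lemma exists_denom (p : Polynomial (Polynomial K)) :
    ∃ d : R, d ≠ 0 ∧ ∃ p0 : Polynomial (Polynomial R),
      p0.map (Φ) = Polynomial.C (Polynomial.C ((φ) d)) * p := by
  induction p using Polynomial.induction_on' with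
  | add p q hp hq =>
      obtain ⟨d1, hd1, q1, hq1⟩ := hp
      obtain ⟨d2, hd2, q2, hq2⟩ := hq
      refine ⟨d1 * d2, mul_ne_zero hd1 hd2,
        Polynomial.C (Polynomial.C d2) * q1 + Polynomial.C (Polynomial.C d1) * q2, ?_⟩
      rw [Polynomial.map_add, Polynomial.map_mul, Polynomial.map_mul, Polynomial.map_C,
        Polynomial.map_C, hq1, hq2]
      simp only [Polynomial.coe_mapRingHom, Polynomial.map_C, map_mul, Polynomial.C_mul]
      ring
  | monomial k q =>
      obtain ⟨d, hd, q0, hq0⟩ := exists_denom_inner q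
      refine ⟨d, hd, Polynomial.monomial k q0, ?_⟩
      rw [Polynomial.map_monomial, Polynomial.coe_mapRingHom, hq0, Polynomial.C_mul_monomial]

lemma prime_CC {p : R} (hp : Prime p) :
    Prime (Polynomial.C (Polynomial.C p) : Polynomial (Polynomial R)) :=
  Polynomial.prime_C_iff.mpr (Polynomial.prime_C_iff.mpr hp)

lemma isUnit_CC {k : FractionRing R} (hk : k ≠ 0) :
    IsUnit (Polynomial.C (Polynomial.C k) : Polynomial (Polynomial K)) :=
  Polynomial.isUnit_C.mpr (Polynomial.isUnit_C.mpr (isUnit_iff_ne_zero.mpr hk))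

lemma CC_cancel {k : FractionRing R} (hk : k ≠ 0) (P Q : Polynomial (Polynomial K))
    (h : Polynomial.C (Polynomial.C k) * P = Q) :
    P = Polynomial.C (Polynomial.C k⁻¹) * Q := by
  rw [← h, ← mul_assoc, ← map_mul, ← map_mul, inv_mul_cancel₀ hk, map_one, map_one, one_mul]

lemma pull_constants [UniqueFactorizationMonoid R] {T : Polynomial (Polynomial R)}
    {U' V' : Polynomial (Polynomial K)} (hU'0 : U' ≠ 0) (hV'0 : V' ≠ 0)
    (hfact : ∀ A B : Polynomial (Polynomial R), T = A * B →
      (∃ a : R, A = Polynomial.C (Polynomial.C a)) ∨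
      (∃ a : R, B = Polynomial.C (Polynomial.C a)))
    (d : R) :
    ∀ A B : Polynomial (Polynomial R), Polynomial.C (Polynomial.C d) * T = A * B →
      (∃ kA : FractionRing R, kA ≠ 0 ∧ A.map (Φ) = Polynomial.C (Polynomial.C kA) * U') →
      (∃ kB : FractionRing R, kB ≠ 0 ∧ B.map (Φ) = Polynomial.C (Polynomial.C kB) * V') →
      IsUnit U' ∨ IsUnit V' := by
  induction d using UniqueFactorizationMonoid.induction_on_prime with
  | h₁ =>
      intro A B hAB ⟨kA, hkA, hA⟩ ⟨kB, hkB, hB⟩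
      exfalso
      rw [map_zero, map_zero, zero_mul] at hAB
      rcases mul_eq_zero.mp hAB.symm with h | h
      · rw [h, Polynomial.map_zero] at hA
        rcases mul_eq_zero.mp hA.symm with h' | h'
        · exact hkA (by simpa using h')
        · exact hU'0 h'
      · rw [h, Polynomial.map_zero] at hB
        rcases mul_eq_zero.mp hB.symm with h' | h'
        · exact hkB (by simpa using h')
        · exact hV'0 h'
  | h₂ x hx =>
      intro A B hAB ⟨kA, hkA, hA⟩ ⟨kB, hkB, hB⟩
      have hxu : IsUnit (Polynomial.C (Polynomial.C x) : Polynomial (Polynomial R)) :=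
        Polynomial.isUnit_C.mpr (Polynomial.isUnit_C.mpr hx)
      obtain ⟨w, hw⟩ := hxu
      have hT : T = (↑w⁻¹ * A) * B := by
        have h1 : (↑w⁻¹ : Polynomial (Polynomial R)) * (Polynomial.C (Polynomial.C x) * T)
            = ↑w⁻¹ * (A * B) := congrArg _ hAB
        rw [← hw, ← mul_assoc, Units.inv_mul, one_mul] at h1
        rw [h1, mul_assoc]
      rcases hfact _ _ hT with ⟨a, ha⟩ | ⟨a, ha⟩
      · left
        have hA' : A = Polynomial.C (Polynomial.C (x * a)) := by
          calc A = ↑w * (↑w⁻¹ * A) := by rw [← mul_assoc, Units.mul_inv, one_mul]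
          _ = Polynomial.C (Polynomial.C x) * Polynomial.C (Polynomial.C a) := by rw [ha, hw]
          _ = Polynomial.C (Polynomial.C (x * a)) := by rw [← map_mul, ← map_mul]
        rw [hA'] at hA
        simp only [Polynomial.map_C, Polynomial.coe_mapRingHom] at hA
        have hU' := CC_cancel hkA U' _ hA.symm
        have hne : (φ) (x * a) ≠ 0 := by
          intro hz
          apply hU'0
          rw [hU', hz, map_zero, map_zero, mul_zero]
        rw [hU']
        exact (isUnit_CC (inv_ne_zero hkA)).mul (isUnit_CC hne)
      · right
        have hB' : B = Polynomial.C (Polynomial.C a) := ha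
        rw [hB'] at hB
        simp only [Polynomial.map_C, Polynomial.coe_mapRingHom] at hB
        have hV' := CC_cancel hkB V' _ hB.symm
        have hne : (φ) a ≠ 0 := by
          intro hz
          apply hV'0
          rw [hV', hz, map_zero, map_zero, mul_zero]
        rw [hV']
        exact (isUnit_CC (inv_ne_zero hkB)).mul (isUnit_CC hne)
  | h₃ d' p hd' hp ih =>
      intro A B hAB ⟨kA, hkA, hA⟩ ⟨kB, hkB, hB⟩
      have hCCp : Prime (Polynomial.C (Polynomial.C p) : Polynomial (Polynomial R)) :=
        prime_CC hp
      have hdvd : (Polynomial.C (Polynomial.C p) : Polynomial (Polynomial R)) ∣ A * B := by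
        rw [← hAB]
        exact ⟨Polynomial.C (Polynomial.C d') * T, by rw [← mul_assoc, ← map_mul, ← map_mul]⟩
      have hφp : (φ) p ≠ 0 := fun h =>
        hp.ne_zero (phi_injective R (by rw [h, map_zero]))
      rcases hCCp.dvd_or_dvd hdvd with ⟨A2, hA2⟩ | ⟨B2, hB2⟩
      · have hAB2 : Polynomial.C (Polynomial.C d') * T = A2 * B := by
          apply mul_left_cancel₀ hCCp.ne_zero
          rw [← mul_assoc, ← map_mul, ← map_mul, hAB, hA2]
          ring
        have hmap : A.map (Φ) = Polynomial.C (Polynomial.C ((φ) p)) * A2.map (Φ) := by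
          rw [hA2, Polynomial.map_mul]
          simp [Polynomial.map_C]
        have h3 := CC_cancel hφp (A2.map (Φ)) _ (hmap.symm.trans hA)
        apply ih A2 B hAB2 ?_ ⟨kB, hkB, hB⟩
        refine ⟨((φ) p)⁻¹ * kA, mul_ne_zero (inv_ne_zero hφp) hkA, ?_⟩
        rw [h3, ← mul_assoc, ← map_mul, ← map_mul]
      · have hAB2 : Polynomial.C (Polynomial.C d') * T = A * B2 := by
          apply mul_left_cancel₀ hCCp.ne_zero
          rw [← mul_assoc, ← map_mul, ← map_mul, hAB, hB2]
          ring
        have hmap : B.map (Φ) = Polynomial.C (Polynomial.C ((φ) p)) * B2.map (Φ) := by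
          rw [hB2, Polynomial.map_mul]
          simp [Polynomial.map_C]
        have h3 := CC_cancel hφp (B2.map (Φ)) _ (hmap.symm.trans hB)
        apply ih A B2 hAB2 ⟨kA, hkA, hA⟩
        refine ⟨((φ) p)⁻¹ * kB, mul_ne_zero (inv_ne_zero hφp) hkB, ?_⟩
        rw [h3, ← mul_assoc, ← map_mul, ← map_mul]

end G

/-- Let `T = Σ t_{i,j} x^i y^j ∈ R[x,y]` be an (n,r)-Brylawski polynomial
over a UFD `R` with fraction field `K`, with `r ≥ 1` and `n − r ≥ 1`. If (i) neither
`x − 1` nor `y − 1` divides `T`, (ii) `t_{1,0} ≠ 0`, and (iii)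
`deg_x T + deg_y T ∈ {n, n+1}`, then in any factorization `T = U·V` one factor is a
constant (an element of `R`); in particular `T` is irreducible in `K[x,y]`. -/
theorem brylawski_irreducible (R : Type*) [CommRing R] [IsDomain R]
    [UniqueFactorizationMonoid R] (n : ℕ) (r : ℤ) (c : R) (hc : c ≠ 0)
    (T : Polynomial (Polynomial R)) (hT : IsBrylawski R n r c T)
    (hr : 1 ≤ r) (hnr : 1 ≤ (n : ℤ) - r)
    (hx1 : ¬ ((Polynomial.X - 1 : Polynomial (Polynomial R)) ∣ T))
    (hy1 : ¬ ((Polynomial.C (Polynomial.X - 1) : Polynomial (Polynomial R)) ∣ T))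
    (ht10 : (T.coeff 1).coeff 0 ≠ 0)
    (hdeg : T.natDegree + degY T = n ∨ T.natDegree + degY T = n + 1) :
    (∀ U V : Polynomial (Polynomial R), T = U * V →
        (∃ a : R, U = Polynomial.C (Polynomial.C a)) ∨
        (∃ a : R, V = Polynomial.C (Polynomial.C a))) ∧
    Irreducible (T.map (Polynomial.mapRingHom (algebraMap R (FractionRing R)))) := by
  have hbound : T.natDegree + degY T ≤ n + 1 := by rcases hdeg with h | h <;> omega
  have part1 : ∀ U V : Polynomial (Polynomial R), T = U * V →
      (∃ a : R, U = Polynomial.C (Polynomial.C a)) ∨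
      (∃ a : R, V = Polynomial.C (Polynomial.C a)) :=
    fun U V h => no_factor hc hT hr hx1 hy1 ht10 hbound h
  refine ⟨part1, ?_⟩
  set Φ := Polynomial.mapRingHom (algebraMap R (FractionRing R)) with hΦ
  set T' := T.map Φ with hT'def
  have hT'1 : T'.coeff 1 ≠ 0 := by
    rw [hT'def, Polynomial.coeff_map]
    intro h
    apply ht10
    have h2 : T.coeff 1 = 0 := by
      apply Polynomial.map_injective _ (phi_injective R)
      rw [Polynomial.map_zero]
      rw [hΦ, Polynomial.coe_mapRingHom] at h
      exact h
    rw [h2, Polynomial.coeff_zero]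
  have hT'0 : T' ≠ 0 := fun h => hT'1 (by rw [h]; simp)
  constructor
  · intro hu
    obtain ⟨q, hq, hqe⟩ := Polynomial.isUnit_iff.mp hu
    apply hT'1
    rw [← hqe, Polynomial.coeff_C]
    simp
  · intro U' V' hUV'
    have hU'0 : U' ≠ 0 := fun h => hT'0 (by rw [hUV', h, zero_mul])
    have hV'0 : V' ≠ 0 := fun h => hT'0 (by rw [hUV', h, mul_zero])
    obtain ⟨dU, hdU, A0, hA0⟩ := exists_denom U'
    obtain ⟨dV, hdV, B0, hB0⟩ := exists_denom V'
    have hφdU : algebraMap R (FractionRing R) dU ≠ 0 :=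
      fun h => hdU (phi_injective R (by rw [h, map_zero]))
    have hφdV : algebraMap R (FractionRing R) dV ≠ 0 :=
      fun h => hdV (phi_injective R (by rw [h, map_zero]))
    have hmain : Polynomial.C (Polynomial.C (dU * dV)) * T = A0 * B0 := by
      apply Phi_injective
      show (Polynomial.C (Polynomial.C (dU * dV)) * T).map Φ = (A0 * B0).map Φ
      rw [Polynomial.map_mul, Polynomial.map_mul, hA0, hB0, Polynomial.map_C, ← hT'def, hUV']
      simp only [hΦ, Polynomial.coe_mapRingHom, Polynomial.map_C, map_mul]
      ring
    exact pull_constants hU'0 hV'0 part1 (dU * dV) A0 B0 hmain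
      ⟨algebraMap R (FractionRing R) dU, hφdU, hA0⟩
      ⟨algebraMap R (FractionRing R) dV, hφdV, hB0⟩
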